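/- arXiv:1604.03681 — 7 statements merged into one kernel-verified Lean document; each statement's English description precedes it below -/
import Mathlib

section
/- Let p ≥ 2 be an integer and q = e^{iπ/p}. For every integer n with 0 ≤ n ≤ p−1, the balanced quantum binomial coefficient satisfies [p−1 choose n] = [p−1]!/([n]!·[p−1−n]!) = 1. -/
theorem quantum_aux (p : ℕ) (hp : 2 ≤ p) :
    let q : ℂ := Complex.exp (Real.pi * Complex.I / p)
    (q ≠ 0) ∧ q ^ p = -1 ∧ (∀ k, 1 ≤ k → k ≤ p - 1 → q ^ k - q⁻¹ ^ k ≠ 0) := by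
  intro q
  have hp0 : (p : ℂ) ≠ 0 := Nat.cast_ne_zero.mpr (by omega)
  have hq0 : q ≠ 0 := Complex.exp_ne_zero _
  have hpow : ∀ k : ℕ, q ^ k = Complex.exp (((k * Real.pi / p : ℝ) : ℂ) * Complex.I) := by
    intro k
    show Complex.exp _ ^ k = _
    rw [← Complex.exp_nat_mul]
    congr 1
    push_cast
    field_simp
  have hinv : q⁻¹ = Complex.exp (-(Real.pi * Complex.I / p)) := by
    rw [← Complex.exp_neg]
  have hne : ∀ k, 1 ≤ k → k ≤ p - 1 → q ^ k - q⁻¹ ^ k ≠ 0 := by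
    intro k hk1 hk2
    have hx : q⁻¹ ^ k = Complex.exp (-(((k * Real.pi / p : ℝ) : ℂ) * Complex.I)) := by
      rw [hinv, ← Complex.exp_nat_mul]
      congr 1
      push_cast
      ring
    rw [hpow k, hx]
    set x : ℝ := k * Real.pi / p with hxdef
    have hsin : Real.sin x > 0 := by
      apply Real.sin_pos_of_pos_of_lt_pi
      · positivity
      · rw [hxdef]
        have : (k : ℝ) < p := by
          have : k < p := by omega
          exact_mod_cast this
        rw [div_lt_iff₀ (by positivity)]
        nlinarith [Real.pi_pos]
    have key : Complex.exp ((x:ℂ) * Complex.I) - Complex.exp (-((x:ℂ) * Complex.I)) =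
        2 * Complex.sin x * Complex.I := by
      rw [Complex.sin]
      field_simp
      rw [Complex.I_sq]
      ring
    rw [key]
    simp only [← Complex.ofReal_sin]
    intro h
    have := mul_eq_zero.mp h
    rcases this with h1 | h2
    · rcases mul_eq_zero.mp h1 with h3 | h4
      · norm_num at h3
      · rw [Complex.ofReal_eq_zero] at h4
        linarith
    · exact Complex.I_ne_zero h2
  refine ⟨hq0, ?_, hne⟩
  show Complex.exp _ ^ p = -1
  rw [← Complex.exp_nat_mul]
  rw [show (p : ℂ) * (Real.pi * Complex.I / p) = Real.pi * Complex.I by field_simp]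
  exact Complex.exp_pi_mul_I

/-- For `q = e^{iπ/p}` and `0 ≤ n ≤ p-1`, the balanced quantum binomial coefficient
`[p-1 choose n] = [p-1]! / ([n]! [p-1-n]!)` equals `1`. -/
theorem quantum_binomial_top_row (p n : ℕ) (hp : 2 ≤ p) (hn : n ≤ p - 1) :
    let q : ℂ := Complex.exp (Real.pi * Complex.I / p)
    let qi : ℕ → ℂ := fun k => (q ^ k - q⁻¹ ^ k) / (q - q⁻¹)
    let qfact : ℕ → ℂ := fun m => ∏ k ∈ Finset.Icc 1 m, qi k
    qfact (p - 1) / (qfact n * qfact (p - 1 - n)) = 1 := by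
  intro q qi qfact
  obtain ⟨hq0, hqp, hnum⟩ := quantum_aux p hp
  have hden : q - q⁻¹ ≠ 0 := by
    have := hnum 1 le_rfl (by omega)
    simpa using this
  have hqi_ne : ∀ k, 1 ≤ k → k ≤ p - 1 → qi k ≠ 0 := fun k h1 h2 =>
    div_ne_zero (hnum k h1 h2) hden
  have hinvp : q⁻¹ ^ p = -1 := by
    rw [inv_pow, hqp]; norm_num
  have hsym : ∀ k, 1 ≤ k → k ≤ p - 1 → qi (p - k) = qi k := by
    intro k h1 h2
    have hkp : k ≤ p := by omega
    have hqk : q ^ k ≠ 0 := pow_ne_zero _ hq0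
    have e1 : q ^ (p - k) * q ^ k = -1 := by
      rw [← pow_add, Nat.sub_add_cancel hkp]; exact hqp
    have e2 : q⁻¹ ^ (p - k) * q⁻¹ ^ k = -1 := by
      rw [← pow_add, Nat.sub_add_cancel hkp]; exact hinvp
    have h1' : q ^ (p - k) = -(q⁻¹ ^ k) := by
      rw [inv_pow]
      field_simp
      linear_combination e1
    have h2' : q⁻¹ ^ (p - k) = -(q ^ k) := by
      have hk1 : q⁻¹ ^ k * q ^ k = 1 := by rw [← mul_pow, inv_mul_cancel₀ hq0, one_pow]
      linear_combination (q ^ k) * e2 - (q⁻¹ ^ (p - k)) * hk1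
    show (q ^ (p - k) - q⁻¹ ^ (p - k)) / (q - q⁻¹) = (q ^ k - q⁻¹ ^ k) / (q - q⁻¹)
    rw [h1', h2']
    ring
  have hfact_ne : ∀ m, m ≤ p - 1 → qfact m ≠ 0 := by
    intro m hm
    apply Finset.prod_ne_zero_iff.mpr
    intro k hk
    rw [Finset.mem_Icc] at hk
    exact hqi_ne k hk.1 (by omega)
  have key : qfact (p - 1) = qfact n * qfact (p - 1 - n) := by
    show ∏ k ∈ Finset.Icc 1 (p - 1), qi k = _
    rw [show Finset.Icc 1 (p - 1) = Finset.Ioc 0 (p - 1) from rfl,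
        ← Finset.prod_Ioc_consecutive qi (Nat.zero_le n) hn]
    congr 1
    show ∏ k ∈ Finset.Ioc n (p - 1), qi k = ∏ k ∈ Finset.Icc 1 (p - 1 - n), qi k
    apply Finset.prod_nbij' (fun k => p - k) (fun k => p - k)
    · intro a ha
      rw [Finset.mem_Ioc] at ha
      rw [Finset.mem_Icc]
      omega
    · intro a ha
      rw [Finset.mem_Icc] at ha
      rw [Finset.mem_Ioc]
      omega
    · intro a ha
      rw [Finset.mem_Ioc] at ha
      omega
    · intro a ha
      rw [Finset.mem_Icc] at ha
      omega
    · intro a ha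
      rw [Finset.mem_Ioc] at ha
      have := hsym (p - a) (by omega) (by omega)
      rw [show p - (p - a) = a by omega] at this
      exact this
  rw [key, div_self (mul_ne_zero (hfact_ne n hn) (hfact_ne _ (by omega)))]
end

section
/- Let p ≥ 1 be an integer. The polynomial ψ(x) = U_{2p+1}(x) − U_{2p−1}(x) − 2 factors over ℝ as ψ(x) = (x − 2)·(x + 2)·∏_{j=1}^{p−1}(x − 2cos(πj/p))², where U_s are the Chebyshev polynomials with U_0 = 0, U_1 = 1, U_{s+1} = x·U_s − U_{s−1}. -/
open Polynomial

/-- The renormalized Chebyshev polynomials of the second kind: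
`U 0 = 0`, `U 1 = 1`, `U (s+2) = X · U (s+1) - U s`. -/
noncomputable def chebU : ℕ → Polynomial ℤ
  | 0 => 0
  | 1 => 1
  | (n + 2) => Polynomial.X * chebU (n + 1) - chebU n

open Polynomial

lemma chebU_add_two (n : ℕ) : chebU (n + 2) = X * chebU (n + 1) - chebU n := rfl

lemma chebU_add_formula (m : ℕ) : ∀ n, chebU (m + n + 1) =
    chebU (m + 1) * chebU (n + 1) - chebU m * chebU n := by
  intro n
  induction n using Nat.strong_induction_on with
  | _ n ih =>
    match n with
    | 0 => simp [chebU]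
    | 1 =>
      show chebU (m + 2) = _
      rw [chebU_add_two]
      show _ = chebU (m+1) * chebU 2 - chebU m * chebU 1
      simp [chebU]; ring
    | (n + 2) =>
      have h1 := ih (n+1) (by omega)
      have h0 := ih n (by omega)
      have e : m + (n + 2) + 1 = (m + n + 1) + 2 := by ring
      rw [e, chebU_add_two]
      have e1 : m + n + 1 + 1 = m + (n+1) + 1 := by ring
      rw [e1, h1, h0, chebU_add_two (n+1), chebU_add_two n]
      ring

lemma chebU_det (n : ℕ) : chebU (n + 2) * chebU n = chebU (n + 1) ^ 2 - 1 := by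
  induction n with
  | zero => simp [chebU]
  | succ n ih =>
    rw [chebU_add_two n] at ih ⊢
    rw [chebU_add_two (n+1), chebU_add_two n]
    linear_combination ih

lemma psi_eq (q : ℕ) : chebU (2*q + 3) - chebU (2*q + 1) - 2
    = (X ^ 2 - 4) * chebU (q + 1) ^ 2 := by
  have h1 : chebU (2*q + 3) = chebU (q+2) * chebU (q+2) - chebU (q+1) * chebU (q+1) := by
    have := chebU_add_formula (q+1) (q+1); rw [← this]; ring_nf
  have h2 : chebU (2*q + 1) = chebU (q+1) * chebU (q+1) - chebU q * chebU q := by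
    have := chebU_add_formula q q; rw [← this]; ring_nf
  have h3 := chebU_det q
  have h4 := chebU_add_two q
  rw [h4] at h3
  rw [h1, h2, h4]
  linear_combination (-2 : Polynomial ℤ) * h3
lemma chebU_monic : ∀ n, (chebU (n + 1)).Monic ∧ (chebU (n + 1)).natDegree = n := by
  intro n
  induction n using Nat.strong_induction_on with
  | _ n ih =>
    match n with
    | 0 => exact ⟨monic_one, natDegree_one⟩
    | 1 => constructor
           · show (X * 1 - 0 : Polynomial ℤ).Monic
             simpa using monic_X
           · show (X * 1 - 0 : Polynomial ℤ).natDegree = 1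
             simp
    | (n + 2) =>
      obtain ⟨m1, d1⟩ := ih (n+1) (by omega)
      obtain ⟨m0, d0⟩ := ih n (by omega)
      rw [chebU_add_two]
      have hm : (X * chebU (n + 2)).Monic := monic_X.mul m1
      have hd : (X * chebU (n + 2)).natDegree = n + 2 := by
        rw [natDegree_mul X_ne_zero m1.ne_zero, natDegree_X, d1]; omega
      have hlt : (chebU (n+1)).degree < (X * chebU (n + 2)).degree := by
        rw [degree_eq_natDegree m0.ne_zero, degree_eq_natDegree hm.ne_zero, hd, d0]
        exact_mod_cast by omega
      refine ⟨hm.sub_of_left hlt, ?_⟩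
      rw [natDegree_sub_eq_left_of_natDegree_lt, hd]
      rw [hd, d0]; omega

lemma chebU_sin (θ : ℝ) : ∀ n : ℕ,
    Real.sin θ * ((chebU n).map (Int.castRingHom ℝ)).eval (2 * Real.cos θ)
      = Real.sin (n * θ) := by
  intro n
  induction n using Nat.strong_induction_on with
  | _ n ih =>
    match n with
    | 0 => simp [chebU]
    | 1 => simp [chebU]
    | (n + 2) =>
      have h1 := ih (n+1) (by omega)
      have h0 := ih n (by omega)
      rw [chebU_add_two]
      have e2 : ((n : ℝ) + 2) * θ = (n+1) * θ + θ := by ring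
      have e0 : (n : ℝ) * θ = (n+1) * θ - θ := by ring
      push_cast
      rw [e2, Real.sin_add]
      push_cast at h1 h0
      rw [e0, Real.sin_sub] at h0
      simp only [Polynomial.map_sub, Polynomial.map_mul, map_X, eval_sub, eval_mul, eval_X]
      linear_combination 2 * Real.cos θ * h1 - h0

lemma chebU_prod (p : ℕ) (hp : 1 ≤ p) :
    (chebU p).map (Int.castRingHom ℝ)
      = ∏ j ∈ Finset.Icc 1 (p - 1), (X - C (2 * Real.cos (Real.pi * j / p))) := by
  obtain ⟨q, rfl⟩ : ∃ q, p = q + 1 := ⟨p - 1, by omega⟩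
  set r : ℕ → ℝ := fun j => 2 * Real.cos (Real.pi * j / (q + 1)) with hr
  set f := (chebU (q + 1)).map (Int.castRingHom ℝ) with hf
  have hmon : f.Monic := ((chebU_monic q).1).map _
  have hdeg : f.natDegree = q := by
    rw [hf, (chebU_monic q).1.natDegree_map, (chebU_monic q).2]
  have hθ : ∀ j ∈ Finset.Icc 1 (q + 1 - 1), 0 < Real.pi * j / (q + 1) ∧
      Real.pi * j / (q + 1) < Real.pi := by
    intro j hj
    simp only [Finset.mem_Icc] at hj
    have h1 : (1 : ℝ) ≤ j := by exact_mod_cast hj.1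
    have h2 : (j : ℝ) < q + 1 := by exact_mod_cast (by omega : j < q + 1)
    have hq1 : (0:ℝ) < q + 1 := by positivity
    constructor
    · positivity
    · rw [div_lt_iff₀ hq1]
      nlinarith [Real.pi_pos]
  have hroot : ∀ j ∈ Finset.Icc 1 (q + 1 - 1), f.IsRoot (r j) := by
    intro j hj
    obtain ⟨h0, h1⟩ := hθ j hj
    have hs := chebU_sin (Real.pi * j / (q + 1)) (q + 1)
    have hsin : Real.sin (Real.pi * j / (q + 1)) ≠ 0 :=
      ne_of_gt (Real.sin_pos_of_pos_of_lt_pi h0 h1)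
    have hval : ((q : ℝ) + 1) * (Real.pi * j / (q + 1)) = j * Real.pi := by
      field_simp
    rw [show ((q + 1 : ℕ) : ℝ) = (q : ℝ) + 1 by push_cast; ring, hval,
      Real.sin_nat_mul_pi] at hs
    exact (mul_eq_zero.mp hs).resolve_left hsin
  have hinj : ∀ a ∈ Finset.Icc 1 (q + 1 - 1), ∀ b ∈ Finset.Icc 1 (q + 1 - 1),
      a ≠ b → r a ≠ r b := by
    intro a ha b hb hab
    obtain ⟨ha0, ha1⟩ := hθ a ha
    obtain ⟨hb0, hb1⟩ := hθ b hb
    intro hcontra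
    have : Real.cos (Real.pi * a / (q + 1)) = Real.cos (Real.pi * b / (q + 1)) := by
      have := hcontra; simp only [hr] at this; linarith
    have heq := Real.injOn_cos ⟨le_of_lt ha0, le_of_lt ha1⟩ ⟨le_of_lt hb0, le_of_lt hb1⟩ this
    have hq1 : (0:ℝ) < q + 1 := by positivity
    have : (a : ℝ) = b := by
      rw [div_left_inj' hq1.ne', mul_right_inj' Real.pi_pos.ne'] at heq
      exact heq
    exact hab (by exact_mod_cast this)
  have hdvd : (∏ j ∈ Finset.Icc 1 (q + 1 - 1), (X - C (r j))) ∣ f := by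
    apply Finset.prod_dvd_of_coprime
    · intro a ha b hb hab
      exact isCoprime_X_sub_C_of_isUnit_sub
        (sub_ne_zero_of_ne (hinj a ha b hb hab)).isUnit
    · intro j hj
      exact dvd_iff_isRoot.mpr (hroot j hj)
  have hgmon : (∏ j ∈ Finset.Icc 1 (q + 1 - 1), (X - C (r j))).Monic :=
    monic_prod_of_monic _ _ fun j _ => monic_X_sub_C _
  have hgdeg : (∏ j ∈ Finset.Icc 1 (q + 1 - 1), (X - C (r j))).natDegree = q := by
    rw [natDegree_prod_of_monic _ _ fun j _ => monic_X_sub_C _]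
    simp [natDegree_X_sub_C]
  symm
  simp only [Nat.cast_add, Nat.cast_one]
  apply eq_of_dvd_of_natDegree_le_of_leadingCoeff hdvd
  · rw [hdeg, hgdeg]
  · rw [hgmon.leadingCoeff, hmon.leadingCoeff]

/-- The polynomial `ψ = U_{2p+1} - U_{2p-1} - 2` factors over `ℝ` as
`(x-2)(x+2)∏_{j=1}^{p-1}(x - 2cos(πj/p))²`. -/
theorem psi_factorization (p : ℕ) (hp : 1 ≤ p) :
    (chebU (2 * p + 1) - chebU (2 * p - 1) - 2).map (Int.castRingHom ℝ)
      = (X - C 2) * (X + C 2) *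
        ∏ j ∈ Finset.Icc 1 (p - 1), (X - C (2 * Real.cos (Real.pi * j / p))) ^ 2 := by
  obtain ⟨q, rfl⟩ : ∃ q, p = q + 1 := ⟨p - 1, by omega⟩
  have e1 : 2 * (q + 1) + 1 = 2 * q + 3 := by omega
  have e2 : 2 * (q + 1) - 1 = 2 * q + 1 := by omega
  rw [e1, e2, show chebU (2*q+3) - chebU (2*q+1) - 2 = (chebU (2*q+3) - chebU (2*q+1) - 2) from rfl,
    psi_eq q, Polynomial.map_mul, Polynomial.map_pow, chebU_prod (q+1) hp,
    ← Finset.prod_pow]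
  congr 1
  have : ((X:Polynomial ℤ) ^ 2 - 4).map (Int.castRingHom ℝ) = X ^ 2 - 4 := by
    simp
  rw [this]
  have hC : (C (2:ℝ)) = 2 := map_ofNat C 2
  rw [hC]
  ring
end

section
/- Let d ≥ 1 be an integer and t a complex number such that t^m ≠ 1 for all 1 ≤ m ≤ d. Then ∑_{m=1}^{d} (∏_{i=1}^{m−1}(1 − t^{d−i})) / (1 − t^m) = d/(1 − t^d). -/
/-- Auxiliary: after clearing the `1 - t^d` factor the sum telescopes to `d`. -/
lemma partition_identity_aux (t : ℂ) :
    ∀ d : ℕ, 1 ≤ d → (∀ m : ℕ, 1 ≤ m → m ≤ d → t ^ m ≠ 1) →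
      ∑ m ∈ Finset.Icc 1 d, (∏ j ∈ Finset.Icc (d + 1 - m) d, (1 - t ^ j)) / (1 - t ^ m)
        = d := by
  intro d
  induction d with
  | zero => intro h; omega
  | succ d IH =>
    intro _ ht
    have hne : ∀ m : ℕ, 1 ≤ m → m ≤ d + 1 → (1 : ℂ) - t ^ m ≠ 0 := fun m h1 h2 =>
      sub_ne_zero_of_ne (Ne.symm (ht m h1 h2))
    rcases Nat.eq_zero_or_pos d with hd0 | hd1
    · subst hd0
      rw [show Finset.Icc 1 (0 + 1) = {1} from rfl, Finset.sum_singleton,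
        show (0 + 1 + 1 - 1 : ℕ) = 1 from rfl, show Finset.Icc 1 (0 + 1) = {1} from rfl,
        Finset.prod_singleton, pow_one, div_self (by simpa using hne 1 le_rfl le_rfl)]
      norm_num
    · -- inductive step, d ≥ 1
      have IH' := IH hd1 (fun m h1 h2 => ht m h1 (by omega))
      have key : ∀ m ∈ Finset.Icc 1 (d + 1),
          (∏ j ∈ Finset.Icc (d + 1 + 1 - m) (d + 1), (1 - t ^ j)) / (1 - t ^ m)
            = t ^ m * ((∏ j ∈ Finset.Icc (d + 1 - m) d, (1 - t ^ j)) / (1 - t ^ m))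
              + ∏ j ∈ Finset.Icc (d + 2 - m) d, (1 - t ^ j) := by
        intro m hm
        rw [Finset.mem_Icc] at hm
        obtain ⟨hm1, hm2⟩ := hm
        set A := ∏ j ∈ Finset.Icc (d + 2 - m) d, (1 - t ^ j) with hA
        have h1 : ∏ j ∈ Finset.Icc (d + 1 + 1 - m) (d + 1), (1 - t ^ j)
            = A * (1 - t ^ (d + 1)) := by
          rw [show d + 1 + 1 - m = d + 2 - m from by omega,
            Finset.prod_Icc_succ_top (by omega)]
        have h2 : ∏ j ∈ Finset.Icc (d + 1 - m) d, (1 - t ^ j)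
            = (1 - t ^ (d + 1 - m)) * A := by
          rw [← Finset.Ioc_insert_left (show d + 1 - m ≤ d from by omega),
            Finset.prod_insert (by simp), ← Finset.Icc_add_one_left_eq_Ioc,
            show d + 1 - m + 1 = d + 2 - m from by omega]
        have hp : t ^ m * t ^ (d + 1 - m) = t ^ (d + 1) := by
          rw [← pow_add]; congr 1; omega
        have hnum : A * (1 - t ^ (d + 1))
            = t ^ m * ((1 - t ^ (d + 1 - m)) * A) + A * (1 - t ^ m) := by
          linear_combination A * hp
        rw [h1, h2, div_eq_iff (hne m hm1 hm2), add_mul, mul_assoc,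
          div_mul_cancel₀ _ (hne m hm1 hm2)]
        exact hnum
      rw [Finset.sum_congr rfl key, Finset.sum_add_distrib]
      -- first sum: drop the vanishing top term
      have hfirst : ∑ m ∈ Finset.Icc 1 (d + 1),
          t ^ m * ((∏ j ∈ Finset.Icc (d + 1 - m) d, (1 - t ^ j)) / (1 - t ^ m))
          = ∑ m ∈ Finset.Icc 1 d,
            t ^ m * ((∏ j ∈ Finset.Icc (d + 1 - m) d, (1 - t ^ j)) / (1 - t ^ m)) := by
        rw [Finset.sum_Icc_succ_top (by omega)]
        have hz : ∏ j ∈ Finset.Icc (d + 1 - (d + 1)) d, (1 - t ^ j) = 0 := by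
          apply Finset.prod_eq_zero (i := 0) <;> simp
        rw [hz]
        simp
      -- second sum: split bottom and reindex
      have hsecond : ∑ m ∈ Finset.Icc 1 (d + 1), ∏ j ∈ Finset.Icc (d + 2 - m) d, (1 - t ^ j)
          = 1 + ∑ m ∈ Finset.Icc 1 d,
              (1 - t ^ m) * ((∏ j ∈ Finset.Icc (d + 1 - m) d, (1 - t ^ j)) / (1 - t ^ m)) := by
        rw [← Finset.Ioc_insert_left (show 1 ≤ d + 1 from by omega),
          Finset.sum_insert (by simp), ← Finset.Icc_add_one_left_eq_Ioc]
        have e1 : ∏ j ∈ Finset.Icc (d + 2 - 1) d, (1 - t ^ j) = 1 := by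
          rw [Finset.Icc_eq_empty (by omega), Finset.prod_empty]
        rw [e1]
        congr 1
        have hmap : Finset.Icc (1 + 1) (d + 1)
            = Finset.map (addRightEmbedding 1) (Finset.Icc 1 d) := by
          rw [Finset.map_add_right_Icc]
        rw [hmap, Finset.sum_map]
        apply Finset.sum_congr rfl
        intro k hk
        rw [Finset.mem_Icc] at hk
        simp only [addRightEmbedding_apply]
        rw [show d + 2 - (k + 1) = d + 1 - k from by omega,
          mul_div_cancel₀ _ (hne k hk.1 (by omega))]
      rw [hfirst, hsecond, ← add_assoc, add_comm _ (1 : ℂ), add_assoc, ← Finset.sum_add_distrib]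
      have : ∑ m ∈ Finset.Icc 1 d,
          (t ^ m * ((∏ j ∈ Finset.Icc (d + 1 - m) d, (1 - t ^ j)) / (1 - t ^ m))
            + (1 - t ^ m) * ((∏ j ∈ Finset.Icc (d + 1 - m) d, (1 - t ^ j)) / (1 - t ^ m)))
          = ∑ m ∈ Finset.Icc 1 d,
            (∏ j ∈ Finset.Icc (d + 1 - m) d, (1 - t ^ j)) / (1 - t ^ m) := by
        apply Finset.sum_congr rfl
        intro m _
        ring
      rw [this, IH']
      push_cast
      ring

/-- Partition identity: for `t` with `t^m ≠ 1` for `1 ≤ m ≤ d`,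
`∑_{m=1}^{d} (∏_{i=1}^{m-1}(1 - t^{d-i})) / (1 - t^m) = d/(1 - t^d)`. -/
theorem partition_identity_sum (d : ℕ) (hd : 1 ≤ d) (t : ℂ)
    (ht : ∀ m : ℕ, 1 ≤ m → m ≤ d → t ^ m ≠ 1) :
    ∑ m ∈ Finset.Icc 1 d, (∏ i ∈ Finset.Icc 1 (m - 1), (1 - t ^ (d - i))) / (1 - t ^ m)
      = d / (1 - t ^ d) := by
  have hne : ∀ m : ℕ, 1 ≤ m → m ≤ d → (1 : ℂ) - t ^ m ≠ 0 := fun m h1 h2 =>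
    sub_ne_zero_of_ne (Ne.symm (ht m h1 h2))
  have hd' : (1 : ℂ) - t ^ d ≠ 0 := hne d hd le_rfl
  have aux := partition_identity_aux t d hd ht
  obtain ⟨e, rfl⟩ : ∃ e, d = e + 1 := ⟨d - 1, by omega⟩
  have key : ∀ m ∈ Finset.Icc 1 (e + 1),
      (∏ j ∈ Finset.Icc (e + 1 + 1 - m) (e + 1), (1 - t ^ j)) / (1 - t ^ m)
        = (1 - t ^ (e + 1))
          * ((∏ i ∈ Finset.Icc 1 (m - 1), (1 - t ^ (e + 1 - i))) / (1 - t ^ m)) := by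
    intro m hm
    rw [Finset.mem_Icc] at hm
    obtain ⟨hm1, hm2⟩ := hm
    have hsplit : ∏ j ∈ Finset.Icc (e + 1 + 1 - m) (e + 1), (1 - t ^ j)
        = (∏ j ∈ Finset.Icc (e + 1 + 1 - m) e, (1 - t ^ j)) * (1 - t ^ (e + 1)) :=
      Finset.prod_Icc_succ_top (by omega) _
    have hre : ∏ j ∈ Finset.Icc (e + 1 + 1 - m) e, (1 - t ^ j)
        = ∏ i ∈ Finset.Icc 1 (m - 1), (1 - t ^ (e + 1 - i)) := by
      apply Finset.prod_nbij' (fun j => e + 1 - j) (fun i => e + 1 - i)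
      · intro a ha
        simp only [Finset.mem_Icc] at ha ⊢
        omega
      · intro a ha
        simp only [Finset.mem_Icc] at ha ⊢
        omega
      · intro a ha
        simp only [Finset.mem_Icc] at ha
        exact Nat.sub_sub_self (le_trans ha.2 (Nat.le_succ e))
      · intro a ha
        simp only [Finset.mem_Icc] at ha
        exact Nat.sub_sub_self (by omega)
      · intro a ha
        simp only [Finset.mem_Icc] at ha
        rw [Nat.sub_sub_self (le_trans ha.2 (Nat.le_succ e))]
    rw [hsplit, hre, mul_comm, mul_div_assoc]
  rw [Finset.sum_congr rfl key, ← Finset.mul_sum] at aux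
  rw [eq_div_iff hd', mul_comm, aux]
end

section
/- Let n ≥ 1 and s ≥ 1 be integers and let q be a complex number that is not a root of unity (and q ≠ 0). Then ∑_{r=0}^{n} (−1)^r · [n choose r]_q · [n+r+s−1 choose n−1]_q = 0, where [a choose b]_q = [a]!/([b]!·[a−b]!) is the balanced quantum binomial coefficient. -/
namespace QBaux
variable (q : ℂ)

noncomputable def qi (k : ℕ) : ℂ := (q ^ k - q⁻¹ ^ k) / (q - q⁻¹)
noncomputable def qfact (m : ℕ) : ℂ := ∏ k ∈ Finset.Icc 1 m, qi q k
noncomputable def qbinom (a b : ℕ) : ℂ := qfact q a / (qfact q b * qfact q (a - b))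
noncomputable def B (n r : ℕ) : ℂ := if r ≤ n then qbinom q n r else 0

lemma hsub (hq0 : q ≠ 0) (hq : ∀ k : ℕ, 0 < k → q ^ k ≠ 1) : q - q⁻¹ ≠ 0 := by
  intro h
  have h2 : q = q⁻¹ := sub_eq_zero.mp h
  exact hq 2 (by norm_num) (by rw [pow_two]; nth_rewrite 2 [h2]; exact mul_inv_cancel₀ hq0)

lemma qi_ne (hq0 : q ≠ 0) (hq : ∀ k : ℕ, 0 < k → q ^ k ≠ 1) (k : ℕ) (hk : 1 ≤ k) :
    qi q k ≠ 0 := by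
  apply div_ne_zero _ (hsub q hq0 hq)
  intro h
  have h2 : q ^ k = q⁻¹ ^ k := sub_eq_zero.mp h
  apply hq (2 * k) (by omega)
  rw [two_mul, pow_add]
  nth_rewrite 2 [h2]
  rw [inv_pow]
  exact mul_inv_cancel₀ (pow_ne_zero _ hq0)

lemma qfact_ne (hq0 : q ≠ 0) (hq : ∀ k : ℕ, 0 < k → q ^ k ≠ 1) (m : ℕ) : qfact q m ≠ 0 := by
  apply Finset.prod_ne_zero_iff.mpr
  intro k hk
  exact qi_ne q hq0 hq k (Finset.mem_Icc.mp hk).1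

lemma qi_add (a b : ℕ) : qi q (a + b) = q⁻¹ ^ a * qi q b + q ^ b * qi q a := by
  rw [qi, qi, qi, ← mul_div_assoc, ← mul_div_assoc, ← add_div]
  congr 1
  rw [pow_add, pow_add]
  ring

lemma qfact_succ (m : ℕ) : qfact q (m + 1) = qfact q m * qi q (m + 1) := by
  rw [qfact, qfact, Finset.prod_Icc_succ_top (by omega)]

lemma qfact_zero : qfact q 0 = 1 := by simp [qfact]

lemma qbinom_self (hq0 : q ≠ 0) (hq : ∀ k : ℕ, 0 < k → q ^ k ≠ 1) (n : ℕ) :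
    qbinom q n n = 1 := by
  rw [qbinom, Nat.sub_self, qfact_zero, mul_one, div_self (qfact_ne q hq0 hq n)]

lemma qbinom_zero (hq0 : q ≠ 0) (hq : ∀ k : ℕ, 0 < k → q ^ k ≠ 1) (n : ℕ) :
    qbinom q n 0 = 1 := by
  rw [qbinom, Nat.sub_zero, qfact_zero, one_mul, div_self (qfact_ne q hq0 hq n)]

lemma hpq (hq0 : q ≠ 0) (m r : ℕ) : q ^ (m + 1) * q⁻¹ ^ (r + 1) = q ^ m * q⁻¹ ^ r := by
  have hc : q * q⁻¹ = 1 := mul_inv_cancel₀ hq0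
  calc q ^ (m + 1) * q⁻¹ ^ (r + 1) = q ^ m * q⁻¹ ^ r * (q * q⁻¹) := by
        rw [pow_succ, pow_succ]; ring
    _ = q ^ m * q⁻¹ ^ r := by rw [hc, mul_one]

lemma hqq (hq0 : q ≠ 0) (e : ℕ) : q ^ e * q⁻¹ ^ e = 1 := by
  rw [← mul_pow, mul_inv_cancel₀ hq0, one_pow]

lemma pascal (hq0 : q ≠ 0) (hq : ∀ k : ℕ, 0 < k → q ^ k ≠ 1) (a b : ℕ) :
    qbinom q (a + 1 + (b + 1)) (a + 1)
      = q⁻¹ ^ (a + 1) * qbinom q (a + b + 1) (a + 1) + q ^ (b + 1) * qbinom q (a + b + 1) a := by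
  have hfa := qfact_ne q hq0 hq a
  have hfb := qfact_ne q hq0 hq b
  have hia := qi_ne q hq0 hq (a + 1) (by omega)
  have hib := qi_ne q hq0 hq (b + 1) (by omega)
  have key : qi q (a + b + 1 + 1) = q⁻¹ ^ (a + 1) * qi q (b + 1) + q ^ (b + 1) * qi q (a + 1) := by
    rw [show a + b + 1 + 1 = (a + 1) + (b + 1) by omega]; exact qi_add q (a + 1) (b + 1)
  have e1 : a + 1 + (b + 1) - (a + 1) = b + 1 := by omega
  have e2 : a + b + 1 - (a + 1) = b := by omega
  have e3 : a + b + 1 - a = b + 1 := by omega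
  have e4 : a + 1 + (b + 1) = (a + b + 1) + 1 := by omega
  rw [qbinom, qbinom, qbinom, e1, e2, e3, e4, qfact_succ, qfact_succ q a, qfact_succ q b]
  rw [key]
  have hX : qfact q a * qi q (a + 1) * qfact q b ≠ 0 :=
    mul_ne_zero (mul_ne_zero hfa hia) hfb
  have hY : qfact q a * (qfact q b * qi q (b + 1)) ≠ 0 :=
    mul_ne_zero hfa (mul_ne_zero hfb hib)
  have hD1 : qfact q a * qi q (a + 1) * (qfact q b * qi q (b + 1)) ≠ 0 :=
    mul_ne_zero (mul_ne_zero hfa hia) (mul_ne_zero hfb hib)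
  rw [mul_div_assoc', mul_div_assoc', div_add_div _ _ hX hY,
    div_eq_div_iff hD1 (mul_ne_zero hX hY)]
  ring

lemma B_zero (hq0 : q ≠ 0) (hq : ∀ k : ℕ, 0 < k → q ^ k ≠ 1) (n : ℕ) : B q n 0 = 1 := by
  rw [B, if_pos (Nat.zero_le n), qbinom_zero q hq0 hq]

lemma B_succ (hq0 : q ≠ 0) (hq : ∀ k : ℕ, 0 < k → q ^ k ≠ 1) (n r : ℕ) :
    B q (n + 1) (r + 1)
      = q⁻¹ ^ (r + 1) * B q n (r + 1) + q ^ (n + 1) * q⁻¹ ^ (r + 1) * B q n r := by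
  rcases Nat.lt_trichotomy (r + 1) (n + 1) with h | h | h
  · obtain ⟨b, hb⟩ : ∃ b, n = r + b + 1 := ⟨n - r - 1, by omega⟩
    subst hb
    rw [B, if_pos (by omega), B, if_pos (by omega), B, if_pos (by omega)]
    rw [show r + b + 1 + 1 = r + 1 + (b + 1) by omega]
    rw [pascal q hq0 hq r b]
    rw [show q ^ (r + 1 + (b + 1)) * q⁻¹ ^ (r + 1) = q ^ (b + 1) from by
      rw [show r + 1 + (b + 1) = (b + 1) + (r + 1) by omega, pow_add]
      rw [mul_assoc, hqq q hq0 (r + 1), mul_one]]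
  · have hrn : r = n := by omega
    subst hrn
    rw [B, if_pos le_rfl, B, if_neg (by omega), B, if_pos le_rfl]
    rw [qbinom_self q hq0 hq, qbinom_self q hq0 hq, hqq q hq0 (r + 1)]
    ring
  · rw [B, if_neg (by omega), B, if_neg (by omega), B, if_neg (by omega)]
    ring

lemma S_eq_P (hq0 : q ≠ 0) (hq : ∀ k : ℕ, 0 < k → q ^ k ≠ 1) (n : ℕ) (z : ℂ) :
    ∑ r ∈ Finset.range (n + 1), (-1 : ℂ) ^ r * B q n r * z ^ r
      = ∏ k ∈ Finset.range n, (1 - z * q ^ n * q⁻¹ ^ (2 * k + 1)) := by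
  induction n generalizing z with
  | zero => simp [B_zero q hq0 hq]
  | succ n ih =>
    rw [Finset.sum_range_succ']
    simp only [pow_zero, mul_one, one_mul, B_zero q hq0 hq]
    have hstep : ∀ r : ℕ, (-1 : ℂ) ^ (r + 1) * B q (n + 1) (r + 1) * z ^ (r + 1)
        = (-1 : ℂ) ^ (r + 1) * B q n (r + 1) * (z * q⁻¹) ^ (r + 1)
          + (-(z * q ^ n)) * ((-1 : ℂ) ^ r * B q n r * (z * q⁻¹) ^ r) := by
      intro r
      rw [B_succ q hq0 hq n r, hpq q hq0 n r]
      ring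
    rw [Finset.sum_congr rfl (fun r _ => hstep r), Finset.sum_add_distrib, ← Finset.mul_sum]
    have h1 : (∑ r ∈ Finset.range (n + 1),
          (-1 : ℂ) ^ (r + 1) * B q n (r + 1) * (z * q⁻¹) ^ (r + 1)) + 1
        = ∑ r ∈ Finset.range (n + 1), (-1 : ℂ) ^ r * B q n r * (z * q⁻¹) ^ r := by
      have h2 := Finset.sum_range_succ'
        (fun r => (-1 : ℂ) ^ r * B q n r * (z * q⁻¹) ^ r) (n + 1)
      have h3 := Finset.sum_range_succ
        (fun r => (-1 : ℂ) ^ r * B q n r * (z * q⁻¹) ^ r) (n + 1)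
      simp only [pow_zero, mul_one, one_mul, B_zero q hq0 hq] at h2
      rw [h3, B, if_neg (by omega), mul_zero, zero_mul, add_zero] at h2
      exact h2.symm
    rw [add_right_comm, h1, ih (z * q⁻¹), Finset.prod_range_succ']
    have hgk : ∀ k : ℕ, (1 : ℂ) - z * q ^ (n + 1) * q⁻¹ ^ (2 * (k + 1) + 1)
        = 1 - (z * q⁻¹) * q ^ n * q⁻¹ ^ (2 * k + 1) := by
      intro k
      have he : q ^ (n + 1) * q⁻¹ ^ (2 * (k + 1) + 1) = q⁻¹ * (q ^ n * q⁻¹ ^ (2 * k + 1)) := by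
        rw [show 2 * (k + 1) + 1 = (2 * k + 2) + 1 by ring, hpq q hq0 n (2 * k + 2),
          show 2 * k + 2 = (2 * k + 1) + 1 by ring, pow_succ]
        ring
      rw [mul_assoc z (q ^ (n + 1)) _, he]
      ring
    rw [Finset.prod_congr rfl (fun k _ => hgk k)]
    have hg0 : (1 : ℂ) - z * q ^ (n + 1) * q⁻¹ ^ (2 * 0 + 1) = 1 - z * q ^ n := by
      have := hpq q hq0 n 0
      rw [pow_zero, mul_one] at this
      rw [show (2 * 0 + 1 : ℕ) = 0 + 1 by ring, mul_assoc z _ _, this]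
    rw [hg0]
    ring

lemma qfact_add (c t : ℕ) :
    qfact q (c + t) = qfact q c * ∏ j ∈ Finset.range t, qi q (c + 1 + j) := by
  induction t with
  | zero => simp
  | succ t ih =>
    rw [show c + (t + 1) = (c + t) + 1 by omega, qfact_succ, ih, Finset.prod_range_succ,
      show c + t + 1 = c + 1 + t by omega, mul_assoc]

lemma qbinom_expand (hq0 : q ≠ 0) (hq : ∀ k : ℕ, 0 < k → q ^ k ≠ 1) (c m : ℕ) :
    qbinom q (c + m) m = (∏ j ∈ Finset.range m, qi q (c + 1 + j)) / qfact q m := by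
  rw [qbinom, Nat.add_sub_cancel, qfact_add, mul_comm (qfact q m) (qfact q c)]
  rw [mul_div_mul_left _ _ (qfact_ne q hq0 hq c)]

end QBaux
/-- Alternating sum of quantum binomial coefficients:
`∑_{r=0}^{n} (-1)^r [n choose r] [n+r+s-1 choose n-1] = 0` for `n, s ≥ 1`. -/
theorem quantum_binomial_alternating_sum (n s : ℕ) (hn : 1 ≤ n) (hs : 1 ≤ s) (q : ℂ)
    (hq0 : q ≠ 0) (hq : ∀ k : ℕ, 0 < k → q ^ k ≠ 1) :
    let qi : ℕ → ℂ := fun k => (q ^ k - q⁻¹ ^ k) / (q - q⁻¹)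
    let qfact : ℕ → ℂ := fun m => ∏ k ∈ Finset.Icc 1 m, qi k
    let qbinom : ℕ → ℕ → ℂ := fun a b => qfact a / (qfact b * qfact (a - b))
    ∑ r ∈ Finset.range (n + 1),
        (-1 : ℂ) ^ r * qbinom n r * qbinom (n + r + s - 1) (n - 1) = 0 := by
  intro qi qfact qbinom
  show ∑ r ∈ Finset.range (n + 1),
      (-1 : ℂ) ^ r * QBaux.qbinom q n r * QBaux.qbinom q (n + r + s - 1) (n - 1) = 0
  obtain ⟨m, rfl⟩ : ∃ m, n = m + 1 := ⟨n - 1, by omega⟩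
  obtain ⟨sp, rfl⟩ : ∃ sp, s = sp + 1 := ⟨s - 1, by omega⟩
  have hsubne := QBaux.hsub q hq0 hq
  have hfm := QBaux.qfact_ne q hq0 hq m
  -- rewrite each summand using the product expansion
  have hidx : ∀ r : ℕ, m + 1 + r + (sp + 1) - 1 = (r + sp + 1) + m := by intro r; omega
  have hsplit : ∀ r j : ℕ, QBaux.qi q (r + sp + 1 + 1 + j)
      = q ^ r * (q ^ (sp + 2 + j) / (q - q⁻¹)) + q⁻¹ ^ r * (-(q⁻¹ ^ (sp + 2 + j) / (q - q⁻¹))) := by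
    intro r j
    rw [show r + sp + 1 + 1 + j = r + (sp + 2 + j) by omega, QBaux.qi, pow_add, pow_add]
    ring
  have hprodr : ∀ r : ℕ, (∏ j ∈ Finset.range m, QBaux.qi q (r + sp + 1 + 1 + j))
      = ∑ A ∈ (Finset.range m).powerset,
          (q ^ A.card * q⁻¹ ^ (m - A.card)) ^ r *
            ((∏ j ∈ A, q ^ (sp + 2 + j) / (q - q⁻¹)) *
              ∏ j ∈ Finset.range m \ A, (-(q⁻¹ ^ (sp + 2 + j) / (q - q⁻¹)))) := by
    intro r
    rw [Finset.prod_congr rfl (fun j _ => hsplit r j), Finset.prod_add]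
    refine Finset.sum_congr rfl fun A hA => ?_
    rw [Finset.prod_mul_distrib, Finset.prod_mul_distrib, Finset.prod_const, Finset.prod_const,
      Finset.card_sdiff_of_subset (Finset.mem_powerset.mp hA), Finset.card_range, mul_pow,
      pow_right_comm q A.card r, pow_right_comm q⁻¹ (m - A.card) r]
    ring
  have inner : ∀ A ∈ (Finset.range m).powerset,
      (∑ r ∈ Finset.range (m + 2), (-1 : ℂ) ^ r * QBaux.qbinom q (m + 1) r *
        (q ^ A.card * q⁻¹ ^ (m - A.card)) ^ r) = 0 := by
    intro A hA
    have hcard : A.card ≤ m := by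
      have := Finset.card_le_card (Finset.mem_powerset.mp hA)
      simpa using this
    have hBconv : (∑ r ∈ Finset.range (m + 2), (-1 : ℂ) ^ r * QBaux.qbinom q (m + 1) r *
          (q ^ A.card * q⁻¹ ^ (m - A.card)) ^ r)
        = ∑ r ∈ Finset.range (m + 1 + 1), (-1 : ℂ) ^ r * QBaux.B q (m + 1) r *
          (q ^ A.card * q⁻¹ ^ (m - A.card)) ^ r := by
      refine Finset.sum_congr rfl fun r hr => ?_
      have hr' : r ≤ m + 1 := by have := Finset.mem_range.mp hr; omega
      rw [QBaux.B, if_pos hr']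
    rw [hBconv, QBaux.S_eq_P q hq0 hq (m + 1)]
    apply Finset.prod_eq_zero (Finset.mem_range.mpr (show A.card < m + 1 by omega))
    have hcomb : q ^ A.card * q⁻¹ ^ (m - A.card) * q ^ (m + 1) * q⁻¹ ^ (2 * A.card + 1)
        = q ^ (A.card + (m + 1)) * q⁻¹ ^ ((m - A.card) + (2 * A.card + 1)) := by
      rw [pow_add, pow_add]; ring
    rw [hcomb, show (m - A.card) + (2 * A.card + 1) = A.card + (m + 1) by omega,
      QBaux.hqq q hq0, sub_self]
  calc ∑ r ∈ Finset.range (m + 1 + 1), (-1 : ℂ) ^ r * QBaux.qbinom q (m + 1) r *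
        QBaux.qbinom q (m + 1 + r + (sp + 1) - 1) (m + 1 - 1)
      = ∑ r ∈ Finset.range (m + 2), ((-1 : ℂ) ^ r * QBaux.qbinom q (m + 1) r *
          ∏ j ∈ Finset.range m, QBaux.qi q (r + sp + 1 + 1 + j)) / QBaux.qfact q m := by
        refine Finset.sum_congr rfl fun r _ => ?_
        rw [hidx r, show m + 1 - 1 = m from rfl, QBaux.qbinom_expand q hq0 hq (r + sp + 1) m,
          mul_div_assoc]
    _ = (∑ r ∈ Finset.range (m + 2), (-1 : ℂ) ^ r * QBaux.qbinom q (m + 1) r *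
          ∏ j ∈ Finset.range m, QBaux.qi q (r + sp + 1 + 1 + j)) / QBaux.qfact q m :=
        (Finset.sum_div _ _ _).symm
    _ = 0 := by
        rw [div_eq_zero_iff]
        left
        calc ∑ r ∈ Finset.range (m + 2), (-1 : ℂ) ^ r * QBaux.qbinom q (m + 1) r *
              ∏ j ∈ Finset.range m, QBaux.qi q (r + sp + 1 + 1 + j)
            = ∑ r ∈ Finset.range (m + 2), ∑ A ∈ (Finset.range m).powerset,
                ((-1 : ℂ) ^ r * QBaux.qbinom q (m + 1) r *
                  ((q ^ A.card * q⁻¹ ^ (m - A.card)) ^ r *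
                    ((∏ j ∈ A, q ^ (sp + 2 + j) / (q - q⁻¹)) *
                      ∏ j ∈ Finset.range m \ A, (-(q⁻¹ ^ (sp + 2 + j) / (q - q⁻¹)))))) := by
              refine Finset.sum_congr rfl fun r _ => ?_
              rw [hprodr r, Finset.mul_sum]
          _ = ∑ A ∈ (Finset.range m).powerset, ∑ r ∈ Finset.range (m + 2),
                ((-1 : ℂ) ^ r * QBaux.qbinom q (m + 1) r *
                  ((q ^ A.card * q⁻¹ ^ (m - A.card)) ^ r *
                    ((∏ j ∈ A, q ^ (sp + 2 + j) / (q - q⁻¹)) *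
                      ∏ j ∈ Finset.range m \ A, (-(q⁻¹ ^ (sp + 2 + j) / (q - q⁻¹)))))) :=
              Finset.sum_comm
          _ = ∑ A ∈ (Finset.range m).powerset,
                ((∏ j ∈ A, q ^ (sp + 2 + j) / (q - q⁻¹)) *
                  ∏ j ∈ Finset.range m \ A, (-(q⁻¹ ^ (sp + 2 + j) / (q - q⁻¹)))) *
                ∑ r ∈ Finset.range (m + 2), (-1 : ℂ) ^ r * QBaux.qbinom q (m + 1) r *
                  (q ^ A.card * q⁻¹ ^ (m - A.card)) ^ r := by
              refine Finset.sum_congr rfl fun A _ => ?_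
              rw [Finset.mul_sum]
              refine Finset.sum_congr rfl fun r _ => ?_
              ring
          _ = 0 := by
              refine Finset.sum_eq_zero fun A hA => ?_
              rw [inner A hA, mul_zero]
end

section
/- Let R be a commutative ring, V an R-module, C an R-linear endomorphism of V, β ∈ R, and x, y ∈ V elements such that (C − β·id)(y) = x and (C − β·id)(x) = 0. Then for every polynomial P ∈ R[X], one has P(C)(y) = P(β)·y + P′(β)·x, where P′ is the formal derivative of P. -/
lemma pow_on_jordan_block {R : Type*} [CommRing R] {V : Type*} [AddCommGroup V]
    [Module R V] (C : Module.End R V) (β : R) (x y : V)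
    (hy : C y - β • y = x) (hx : C x - β • x = 0) (n : ℕ) :
    (C ^ n) y = β ^ n • y + ((n : R) * β ^ (n - 1)) • x := by
  induction n with
  | zero => simp
  | succ n ih =>
    have hCy : C y = β • y + x := by rw [← hy]; abel
    have hCx : C x = β • x := by rw [sub_eq_zero] at hx; exact hx
    rw [pow_succ', Module.End.mul_apply, ih]
    rw [map_add, map_smul, map_smul, hCy, hCx]
    rcases n with _ | m
    · simp
    · simp only [Nat.add_sub_cancel, Nat.cast_add, Nat.cast_one]
      module

/-- If `(C - β·id) y = x` and `(C - β·id) x = 0`, then for any polynomial `P`,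
`P(C) y = P(β)·y + P′(β)·x`. -/
theorem poly_eval_on_jordan_block {R : Type*} [CommRing R] {V : Type*} [AddCommGroup V]
    [Module R V] (C : Module.End R V) (β : R) (x y : V)
    (hy : C y - β • y = x) (hx : C x - β • x = 0) (P : Polynomial R) :
    (Polynomial.aeval C P) y = P.eval β • y + (Polynomial.derivative P).eval β • x := by
  induction P using Polynomial.induction_on' with
  | add p q hp hq =>
    simp only [map_add, LinearMap.add_apply, hp, hq, Polynomial.eval_add, add_smul]
    abel
  | monomial n a =>
    rw [Polynomial.aeval_monomial, Polynomial.derivative_monomial, Module.End.mul_apply,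
      pow_on_jordan_block C β x y hy hx n]
    simp [Polynomial.eval_monomial, Algebra.algebraMap_eq_smul_one, smul_smul, mul_assoc,
      mul_comm, mul_left_comm]
end

section
/- For every natural number n, ∑_{k=0}^{⌊n/2⌋} (C(n,k) − C(n,k−1))² = Catalan(n), where C(n,k) is the binomial coefficient (with C(n,−1) = 0) and Catalan(n) = C(2n,n)/(n+1) is the n-th Catalan number. -/
open Finset

private lemma sum_choose_sq (n : ℕ) :
    ∑ k ∈ range (n + 1), (n.choose k) * (n.choose k) = (2 * n).choose n := by
  rw [two_mul, Nat.add_choose_eq, Finset.Nat.sum_antidiagonal_eq_sum_range_succ_mk]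
  refine Finset.sum_congr rfl fun k hk => ?_
  have hk' := Finset.mem_range.mp hk
  rw [Nat.choose_symm (by omega : k ≤ n)]

private lemma sum_choose_mul_succ (n : ℕ) (hn : 0 < n) :
    ∑ j ∈ range n, (n.choose j) * (n.choose (j + 1)) = (2 * n).choose (n - 1) := by
  rw [two_mul, Nat.add_choose_eq, Finset.Nat.sum_antidiagonal_eq_sum_range_succ_mk,
    show (n-1).succ = n by omega]
  refine Finset.sum_congr rfl fun k hk => ?_
  have hk' : k < n := Finset.mem_range.mp hk
  congr 1
  rw [← Nat.choose_symm (by omega : k + 1 ≤ n)]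
  congr 1
  omega

private lemma catalan_sub (n : ℕ) (hn : 0 < n) :
    (catalan n : ℤ) = ((2 * n).choose n : ℤ) - (2 * n).choose (n - 1) := by
  have h1 : (n + 1) * catalan n = (2 * n).choose n := by
    rw [succ_mul_catalan_eq_centralBinom, Nat.centralBinom]
  have h2 : (2 * n).choose n * n = (2 * n).choose (n - 1) * (n + 1) := by
    have := Nat.choose_succ_right_eq (2 * n) (n - 1)
    rw [Nat.sub_add_cancel hn] at this
    rw [this]
    congr 1
    omega
  have hne : (n : ℤ) + 1 ≠ 0 := by positivity
  apply mul_left_cancel₀ hne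
  have h1' : ((n : ℤ) + 1) * (catalan n : ℤ) = ((2 * n).choose n : ℤ) := by
    exact_mod_cast h1
  have h2' : ((2 * n).choose n : ℤ) * n = ((2 * n).choose (n - 1) : ℤ) * ((n : ℤ) + 1) := by
    exact_mod_cast h2
  rw [h1']
  linarith

/-- `∑_{k=0}^{⌊n/2⌋} (C(n,k) - C(n,k-1))² = Catalan(n)`, with `C(n,-1) = 0`. -/
theorem sum_sq_ballot_eq_catalan (n : ℕ) :
    ∑ k ∈ Finset.range (n / 2 + 1),
        ((n.choose k : ℤ) - if k = 0 then 0 else (n.choose (k - 1) : ℤ)) ^ 2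
      = (catalan n : ℤ) := by
  rcases Nat.eq_zero_or_pos n with h0 | h0
  · subst h0; norm_num [catalan_zero]
  set g : ℕ → ℤ := fun k => (n.choose k : ℤ) - if k = 0 then 0 else (n.choose (k - 1) : ℤ)
    with hg
  have hgsym : ∀ j ≤ n + 1, g (n + 1 - j) = -g j := by
    intro j hj
    rcases Nat.eq_zero_or_pos j with hz | hz
    · subst hz
      simp [hg, Nat.choose_succ_self]
    rcases Nat.eq_or_lt_of_le hj with he | hl
    · subst he; simp [hg, Nat.choose_succ_self]
    have h1 : n + 1 - j ≠ 0 := by omega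
    have h2 : n + 1 - j - 1 = n - j := by omega
    simp only [hg, if_neg h1, if_neg (by omega : j ≠ 0), h2]
    rw [show n + 1 - j = n - (j - 1) by omega,
      Nat.choose_symm (by omega : j - 1 ≤ n),
      Nat.choose_symm (by omega : j ≤ n)]
    ring
  have hsym : ∀ j ≤ n + 1, g (n + 1 - j) ^ 2 = g j ^ 2 := fun j hj => by
    rw [hgsym j hj]; ring
  -- full sum
  have hT : ∑ k ∈ range (n + 2), g k ^ 2 = 2 * (catalan n : ℤ) := by
    have expand : ∀ k ∈ range (n + 2), g k ^ 2 = (n.choose k : ℤ)^2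
        + (if k = 0 then 0 else (n.choose (k-1) : ℤ))^2
        - 2 * (n.choose k : ℤ) * (if k = 0 then 0 else (n.choose (k-1) : ℤ)) := by
      intro k _; simp only [hg]; ring
    rw [Finset.sum_congr rfl expand, Finset.sum_sub_distrib, Finset.sum_add_distrib]
    have hA : ∑ k ∈ range (n + 2), (n.choose k : ℤ)^2 = ((2*n).choose n : ℤ) := by
      rw [Finset.sum_range_succ, Nat.choose_succ_self, ← sum_choose_sq n]
      push_cast
      rw [add_zero]
      exact Finset.sum_congr rfl fun k _ => by ring
    have hB : ∑ k ∈ range (n + 2), (if k = 0 then 0 else (n.choose (k-1) : ℤ))^2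
        = ((2*n).choose n : ℤ) := by
      rw [Finset.sum_range_succ']
      simp only [if_neg (Nat.succ_ne_zero _), Nat.add_sub_cancel, if_pos rfl]
      rw [← sum_choose_sq n]
      push_cast
      rw [add_zero]
      · exact Finset.sum_congr rfl fun k _ => by ring
    have hD : ∑ k ∈ range (n + 2),
        2 * (n.choose k : ℤ) * (if k = 0 then 0 else (n.choose (k-1) : ℤ))
        = 2 * ((2*n).choose (n-1) : ℤ) := by
      rw [Finset.sum_range_succ']
      simp only [if_neg (Nat.succ_ne_zero _), Nat.add_sub_cancel, if_pos rfl, mul_zero,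
        add_zero]
      rw [Finset.sum_range_succ, Nat.choose_succ_self, ← sum_choose_mul_succ n h0]
      push_cast
      simp only [mul_zero, zero_mul, add_zero]
      rw [Finset.mul_sum]
      exact Finset.sum_congr rfl fun k _ => by ring
    rw [hA, hB, hD, catalan_sub n h0]
    ring
  -- halving
  have key : 2 * ∑ k ∈ range (n / 2 + 1), g k ^ 2 = ∑ k ∈ range (n + 2), g k ^ 2 := by
    rcases Nat.even_or_odd n with ⟨m, hm⟩ | ⟨m, hm⟩
    · subst hm
      have hd : (m + m) / 2 = m := by omega
      have hsplit : ∑ k ∈ range ((m + 1) + (m + 1)), g k ^ 2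
          = (∑ k ∈ range (m + 1), g k ^ 2) + ∑ i ∈ range (m + 1), g ((m + 1) + i) ^ 2 :=
        Finset.sum_range_add _ _ _
      have : ∑ i ∈ range (m + 1), g ((m + 1) + i) ^ 2
          = ∑ i ∈ range (m + 1), g i ^ 2 := by
        rw [← Finset.sum_range_reflect (fun i => g ((m + 1) + i) ^ 2) (m + 1)]
        refine Finset.sum_congr rfl fun j hj => ?_
        have hj' : j < m + 1 := Finset.mem_range.mp hj
        rw [show m + 1 + (m + 1 - 1 - j) = (m + m) + 1 - j by omega]
        exact hsym j (by omega)
      rw [hd, show m + m + 2 = (m + 1) + (m + 1) by ring, hsplit, this]; ring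
    · subst hm
      have hd : (2 * m + 1) / 2 = m := by omega
      have hsplit : ∑ k ∈ range ((m + 2) + (m + 1)), g k ^ 2
          = (∑ k ∈ range (m + 2), g k ^ 2) + ∑ i ∈ range (m + 1), g ((m + 2) + i) ^ 2 :=
        Finset.sum_range_add _ _ _
      have h1 : ∑ i ∈ range (m + 1), g ((m + 2) + i) ^ 2
          = ∑ i ∈ range (m + 1), g i ^ 2 := by
        rw [← Finset.sum_range_reflect (fun i => g ((m + 2) + i) ^ 2) (m + 1)]
        refine Finset.sum_congr rfl fun j hj => ?_
        have hj' : j < m + 1 := Finset.mem_range.mp hj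
        rw [show m + 2 + (m + 1 - 1 - j) = (2 * m + 1) + 1 - j by omega]
        exact hsym j (by omega)
      have h2 : ∑ k ∈ range (m + 2), g k ^ 2
          = (∑ k ∈ range (m + 1), g k ^ 2) + g (m + 1) ^ 2 :=
        Finset.sum_range_succ _ _
      have h3 : g (m + 1) = 0 := by
        simp only [hg, if_neg (Nat.succ_ne_zero m), Nat.add_sub_cancel]
        rw [Nat.choose_symm_half]
        ring
      rw [hd, show 2 * m + 1 + 2 = (m + 2) + (m + 1) by ring, hsplit, h2, h3, h1]; ring
  have := key.trans hT
  exact mul_left_cancel₀ (by norm_num : (2:ℤ) ≠ 0) this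
end

section
/- Let n ≥ 0 and k ≥ 0 be integers with 2k ≤ n. The number of sequences (ε₁, …, ε_n) ∈ {−1, +1}^n such that every partial sum ε₁ + ⋯ + ε_j (1 ≤ j ≤ n) is nonnegative and the total sum equals n − 2k is C(n,k) − C(n,k−1), with the convention C(n,−1) = 0. -/
open Finset

/-- All partial sums nonnegative. -/
def BPre (n : ℕ) (f : Fin n → Bool) : Prop :=
  ∀ j : Fin n, 0 ≤ ∑ i ∈ Finset.univ.filter (fun i => i ≤ j),
      (if f i then (1 : ℤ) else -1)

/-- Total sum. -/
def BTot (n : ℕ) (f : Fin n → Bool) : ℤ :=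
  ∑ i : Fin n, (if f i then (1 : ℤ) else -1)

/-- The count of ballot sequences of length `n` with total sum `s`. -/
noncomputable def Bcnt (n : ℕ) (s : ℤ) : ℕ :=
  Nat.card {f : Fin n → Bool // BPre n f ∧ BTot n f = s}

lemma BTot_snoc (m : ℕ) (g : Fin m → Bool) (b : Bool) :
    BTot (m + 1) (Fin.snoc g b) = BTot m g + (if b then (1 : ℤ) else -1) := by
  unfold BTot
  rw [Fin.sum_univ_castSucc]
  simp [Fin.snoc_castSucc, Fin.snoc_last]

lemma partial_castSucc (m : ℕ) (f : Fin (m + 1) → Bool) (j : Fin m) :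
    (∑ i ∈ Finset.univ.filter (fun i => i ≤ j.castSucc),
        (if f i then (1 : ℤ) else -1)) =
    ∑ i ∈ Finset.univ.filter (fun i => i ≤ j),
        (if Fin.init f i then (1 : ℤ) else -1) := by
  rw [Finset.sum_filter, Finset.sum_filter, Fin.sum_univ_castSucc]
  have hlast : ¬ (Fin.last m ≤ j.castSucc) := by
    simp [Fin.le_castSucc_iff, Fin.lt_iff_val_lt_val, Fin.last]
  simp only [Fin.castSucc_le_castSucc_iff, hlast, if_false, add_zero]
  rfl

lemma partial_last (m : ℕ) (f : Fin (m + 1) → Bool) :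
    (∑ i ∈ Finset.univ.filter (fun i => i ≤ Fin.last m),
        (if f i then (1 : ℤ) else -1)) = BTot (m + 1) f := by
  unfold BTot
  congr 1
  apply Finset.filter_true_of_mem
  intro i _
  exact Fin.le_last i

lemma BPre_iff (m : ℕ) (f : Fin (m + 1) → Bool) :
    BPre (m + 1) f ↔ BPre m (Fin.init f) ∧ 0 ≤ BTot (m + 1) f := by
  constructor
  · intro h
    refine ⟨fun j => ?_, ?_⟩
    · rw [← partial_castSucc]; exact h j.castSucc
    · rw [← partial_last m f]; exact h (Fin.last m)
  · rintro ⟨h1, h2⟩ j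
    induction j using Fin.lastCases with
    | last => rw [partial_last]; exact h2
    | cast j => rw [partial_castSucc]; exact h1 j

lemma snoc_init_eq {m : ℕ} (f : Fin (m + 1) → Bool) (b : Bool)
    (hb : f (Fin.last m) = b) : Fin.snoc (Fin.init f) b = f := by
  rw [← hb, Fin.snoc_init_self]

/-- Split off the last element. -/
def splitEquiv (m : ℕ) (P : (Fin (m + 1) → Bool) → Prop) :
    {f : Fin (m + 1) → Bool // P f} ≃
      {g : Fin m → Bool // P (Fin.snoc g true)} ⊕
      {g : Fin m → Bool // P (Fin.snoc g false)} where
  toFun f :=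
    if h : f.1 (Fin.last m) = true then
      Sum.inl ⟨Fin.init f.1, by rw [snoc_init_eq f.1 true h]; exact f.2⟩
    else
      Sum.inr ⟨Fin.init f.1, by
        rw [snoc_init_eq f.1 false (by simpa using h)]; exact f.2⟩
  invFun g :=
    match g with
    | Sum.inl g => ⟨Fin.snoc g.1 true, g.2⟩
    | Sum.inr g => ⟨Fin.snoc g.1 false, g.2⟩
  left_inv f := by
    dsimp only
    by_cases h : f.1 (Fin.last m) = true
    · rw [dif_pos h]
      exact Subtype.ext (snoc_init_eq f.1 true h)
    · rw [dif_neg h]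
      exact Subtype.ext (snoc_init_eq f.1 false (by simpa using h))
  right_inv g := by
    rcases g with g | g <;>
      simp [Fin.snoc_last, Fin.init_snoc]

lemma Bcnt_succ (m : ℕ) (s : ℤ) (hs : 0 ≤ s) :
    Bcnt (m + 1) s = Bcnt m (s - 1) + Bcnt m (s + 1) := by
  unfold Bcnt
  rw [Nat.card_congr (splitEquiv m (fun f => BPre (m+1) f ∧ BTot (m+1) f = s)),
    Nat.card_sum]
  congr 1
  · apply Nat.card_congr
    apply Equiv.subtypeEquivRight
    intro g
    rw [BPre_iff, BTot_snoc, Fin.init_snoc]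
    norm_num
    constructor
    · rintro ⟨⟨h1, _⟩, h2⟩
      exact ⟨h1, by omega⟩
    · rintro ⟨h1, h2⟩
      exact ⟨⟨h1, by omega⟩, by omega⟩
  · apply Nat.card_congr
    apply Equiv.subtypeEquivRight
    intro g
    rw [BPre_iff, BTot_snoc, Fin.init_snoc]
    norm_num
    constructor
    · rintro ⟨⟨h1, _⟩, h2⟩
      exact ⟨h1, by omega⟩
    · rintro ⟨h1, h2⟩
      exact ⟨⟨h1, by omega⟩, by omega⟩

lemma Bcnt_neg (m : ℕ) (s : ℤ) (hs : s < 0) : Bcnt m s = 0 := by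
  unfold Bcnt
  rw [Nat.card_eq_zero]
  left
  rw [isEmpty_subtype]
  rintro f ⟨h1, h2⟩
  cases m with
  | zero =>
    simp [BTot] at h2; omega
  | succ m =>
    have := h1 (Fin.last m)
    rw [partial_last] at this
    omega

lemma BTot_le (m : ℕ) (f : Fin m → Bool) : BTot m f ≤ m := by
  unfold BTot
  calc ∑ i : Fin m, (if f i then (1:ℤ) else -1) ≤ ∑ _i : Fin m, (1:ℤ) := by
        apply Finset.sum_le_sum; intro i _; split <;> omega
    _ = m := by simp

lemma Bcnt_big (m : ℕ) (s : ℤ) (hs : (m : ℤ) < s) : Bcnt m s = 0 := by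
  unfold Bcnt
  rw [Nat.card_eq_zero]
  left
  rw [isEmpty_subtype]
  rintro f ⟨h1, h2⟩
  have := BTot_le m f
  omega

lemma Bcnt_zero : Bcnt 0 0 = 1 := by
  unfold Bcnt
  rw [Nat.card_eq_one_iff_unique]
  constructor
  · constructor
    rintro ⟨f, _⟩ ⟨g, _⟩
    apply Subtype.ext
    funext i
    exact absurd i.2 (by omega)
  · exact ⟨⟨fun i => true, fun j => absurd j.2 (by omega), by simp [BTot]⟩⟩

lemma Bcnt_main (n : ℕ) : ∀ k : ℕ, 2 * k ≤ n →
    (Bcnt n ((n : ℤ) - 2 * k) : ℤ)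
      = (n.choose k : ℤ) - if k = 0 then 0 else (n.choose (k - 1) : ℤ) := by
  induction n with
  | zero =>
    intro k hk
    have hk0 : k = 0 := by omega
    subst hk0
    simpa using congrArg (Nat.cast : ℕ → ℤ) Bcnt_zero
  | succ m ih =>
    intro k hk
    have hs : (0 : ℤ) ≤ (m + 1 : ℤ) - 2 * k := by push_cast; omega
    rw [show ((m + 1 : ℕ) : ℤ) - 2 * k = ((m + 1 : ℤ) - 2 * k) by push_cast; ring,
      Bcnt_succ m _ hs]
    by_cases hm : 2 * k ≤ m
    · have e1 : (m + 1 : ℤ) - 2 * k - 1 = (m : ℤ) - 2 * k := by ring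
      have h1 := ih k hm
      rcases Nat.eq_zero_or_pos k with hk0 | hk0
      · have e2 : (m + 1 : ℤ) - 2 * k + 1 = (m : ℤ) + 2 := by omega
        rw [e1, e2, Bcnt_big m ((m : ℤ) + 2) (by omega)]
        subst hk0
        push_cast
        simp at h1 ⊢
        omega
      · have hk1 : 2 * (k - 1) ≤ m := by omega
        have h2 := ih (k - 1) hk1
        have e2 : (m + 1 : ℤ) - 2 * k + 1 = (m : ℤ) - 2 * ((k - 1 : ℕ) : ℤ) := by
          omega
        rw [e1, e2]
        push_cast
        rw [h1, h2]
        have p1 : ((m+1).choose k : ℤ) = (m.choose (k-1) : ℤ) + (m.choose k : ℤ) := by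
          rw [show k = (k-1) + 1 by omega, Nat.choose_succ_succ]
          push_cast [Nat.succ_eq_add_one]
          ring
        rcases Nat.eq_or_lt_of_le hk0 with hk1' | hk2
        · have hke : k = 1 := hk1'.symm
          subst hke
          norm_num at p1 ⊢
          all_goals omega
        · have p2 : ((m+1).choose (k-1) : ℤ)
              = (m.choose (k-2) : ℤ) + (m.choose (k-1) : ℤ) := by
            rw [show k - 1 = (k-2) + 1 by omega, Nat.choose_succ_succ]
            push_cast [Nat.succ_eq_add_one]
            ring
          simp only [if_neg (by omega : ¬ k = 0), if_neg (by omega : ¬ k - 1 = 0)]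
          rw [p1, p2, show k - 1 - 1 = k - 2 from by omega]
          ring
    · have hm1 : 2 * k = m + 1 := by omega
      have hk0 : 1 ≤ k := by omega
      have e1 : (m + 1 : ℤ) - 2 * k - 1 = -1 := by omega
      have e2 : (m + 1 : ℤ) - 2 * k + 1 = (m : ℤ) - 2 * ((k - 1 : ℕ) : ℤ) := by
        omega
      rw [e1, e2, Bcnt_neg m (-1) (by omega)]
      have hk1 : 2 * (k - 1) ≤ m := by omega
      have h2 := ih (k - 1) hk1
      push_cast
      rw [h2]
      have p1 : ((m+1).choose k : ℤ) = (m.choose (k-1) : ℤ) + (m.choose k : ℤ) := by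
        rw [show k = (k-1) + 1 by omega, Nat.choose_succ_succ]
        push_cast [Nat.succ_eq_add_one]
        ring
      have hsym : (m.choose k : ℤ) = (m.choose (k-1) : ℤ) := by
        have hd : m - k = k - 1 := by omega
        rw [← Nat.choose_symm (by omega : k ≤ m), hd]
      rcases Nat.eq_or_lt_of_le hk0 with hk1' | hk2
      · have hke : k = 1 := hk1'.symm
        subst hke
        norm_num at p1 hsym ⊢
        all_goals omega
      · have p2 : ((m+1).choose (k-1) : ℤ)
            = (m.choose (k-2) : ℤ) + (m.choose (k-1) : ℤ) := by
          rw [show k - 1 = (k-2) + 1 by omega, Nat.choose_succ_succ]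
          push_cast [Nat.succ_eq_add_one]
          ring
        simp only [if_neg (by omega : ¬ k = 0), if_neg (by omega : ¬ k - 1 = 0)]
        rw [p1, p2, show k - 1 - 1 = k - 2 from by omega]
        omega

/-- The number of `±1` sequences of length `n` with all partial sums nonnegative and
total sum `n - 2k` is the ballot number `C(n,k) - C(n,k-1)` (with `C(n,-1) = 0`). -/
theorem ballot_count (n k : ℕ) (h : 2 * k ≤ n) :
    (Nat.card {f : Fin n → Bool //
        (∀ j : Fin n, 0 ≤ ∑ i ∈ Finset.univ.filter (fun i => i ≤ j),
            (if f i then (1 : ℤ) else -1)) ∧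
        (∑ i : Fin n, (if f i then (1 : ℤ) else -1)) = (n : ℤ) - 2 * k} : ℤ)
      = (n.choose k : ℤ) - if k = 0 then 0 else (n.choose (k - 1) : ℤ) := by
  have := Bcnt_main n k h
  unfold Bcnt BPre BTot at this
  exact this
end
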